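/- Let TA = (L, L₀, L_u, Σ, CX, I, E) be a timed automaton. Then TS(TA) and TS'(URG(TA)) are isomorphic via the identity function on states: both transition systems have the same states and the same initial states, and for all states q, q' and every label α ∈ Σ ∪ ℝ≥0, q →α q' in TS(TA) if and only if q →α q' in TS'(URG(TA)). -/

import Mathlib

/-!
Framework for timed automata.  Clock valuations assign non-negative reals to
clocks.  Guards and location invariants are represented semantically, as
predicates on clock valuations.
-/

/-- Clock valuations: each clock gets a non-negative real. -/
abbrev Val (C : Type) := C → NNReal

/-- The valuation `ν₀` assigning `0` to every clock. -/
def zeroVal {C : Type} : Val C := fun _ => 0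

open Classical in
/-- `ν[λ := 0]`: reset the clocks in `lam` to zero. -/
noncomputable def resetVal {C : Type} (ν : Val C) (lam : Set C) : Val C :=
  fun x => if x ∈ lam then 0 else ν x

/-- `ν + δ`: advance every clock by `δ`. -/
def shift {C : Type} (ν : Val C) (δ : NNReal) : Val C := fun x => ν x + δ

/-- A timed automaton `TA = (L, L₀, L_u, Σ, CX, I, E)` with location type `L`,
action alphabet `A` and clock type `C`:  a set of initial locations (nonempty),
a set of urgent locations, an invariant map, and a set of edges
`(l, a, φ, λ, l')` consisting of source, action, guard, reset set and target. -/
structure TA (L A C : Type) where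
  init : Set L
  init_nonempty : init.Nonempty
  urgent : Set L
  inv : L → Val C → Prop
  edges : Set (L × A × (Val C → Prop) × Set C × L)

/-- States of the associated transition systems: location/valuation pairs. -/
abbrev State (L C : Type) := L × Val C

/-- Initial states: initial locations paired with the zero valuation. -/
def TA.initStates {L A C : Type} (T : TA L A C) : Set (State L C) :=
  {p | p.1 ∈ T.init ∧ p.2 = zeroVal}

/-- Baseline semantics `TS(TA)`.  Labels are `Sum.inl a` for actions `a ∈ Σ`
and `Sum.inr δ` for delays `δ ∈ ℝ≥0`.  Action transitions require the target
invariant to hold; delay transitions require the source location not to be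
urgent and the invariant to hold throughout the delay. -/
def TS {L A C : Type} (T : TA L A C) :
    State L C → (A ⊕ NNReal) → State L C → Prop := fun p α q =>
  match α with
  | Sum.inl a => ∃ φ lam, (p.1, a, φ, lam, q.1) ∈ T.edges ∧ φ p.2 ∧
      q.2 = resetVal p.2 lam ∧ T.inv q.1 q.2
  | Sum.inr δ => p.1 ∉ T.urgent ∧ q.1 = p.1 ∧ q.2 = shift p.2 δ ∧
      ∀ k ≤ δ, T.inv p.1 (shift p.2 k)

/-- Unsatisfied-invariants semantics `TS'(TA)`: like `TS(TA)` except action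
transitions do not require the target invariant to hold. -/
def TS' {L A C : Type} (T : TA L A C) :
    State L C → (A ⊕ NNReal) → State L C → Prop := fun p α q =>
  match α with
  | Sum.inl a => ∃ φ lam, (p.1, a, φ, lam, q.1) ∈ T.edges ∧ φ p.2 ∧
      q.2 = resetVal p.2 lam
  | Sum.inr δ => p.1 ∉ T.urgent ∧ q.1 = p.1 ∧ q.2 = shift p.2 δ ∧
      ∀ k ≤ δ, T.inv p.1 (shift p.2 k)

/-- Reachable states: smallest set containing the initial states and closed
under the transition relation. -/
inductive Reachable {S Λ : Type} (init : Set S) (tr : S → Λ → S → Prop) : S → Prop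
  | base {s : S} : s ∈ init → Reachable init tr s
  | step {s : S} {α : Λ} {s' : S} :
      Reachable init tr s → tr s α s' → Reachable init tr s'

open Classical in
/-- The construction `URG(TA)`:  no urgent locations, invariant `false` on the
previously urgent locations, and each guard strengthened by
`resetPred(I(l'), λ)` (semantically: `I(l')(ν[λ:=0])`). -/
noncomputable def URG {L A C : Type} (T : TA L A C) : TA L A C where
  init := T.init
  init_nonempty := T.init_nonempty
  urgent := ∅
  inv := fun l ν => if l ∈ T.urgent then False else T.inv l ν
  edges := { e | ∃ l a φ lam l', (l, a, φ, lam, l') ∈ T.edges ∧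
      e = (l, a, fun ν => φ ν ∧ T.inv l' (resetVal ν lam), lam, l') }

/-- `TS(TA)` and `TS'(URG(TA))` are isomorphic via the identity on
states: they have the same states (the common type `State L C`) and the same
initial states, and `q →α q'` in `TS(TA)` iff `q →α q'` in `TS'(URG(TA))`. -/
theorem statement_8 {L A C : Type} [Fintype L] [Fintype A] [Fintype C] [Nonempty C]
    (T : TA L A C) :
    (URG T).initStates = T.initStates ∧
    ∀ (p q : State L C) (α : A ⊕ NNReal), TS T p α q ↔ TS' (URG T) p α q := by
  constructor
  · rfl
  · rintro p q (a | δ)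
    · constructor
      · rintro ⟨φ, lam, he, hφ, hq, hinv⟩
        refine ⟨fun ν => φ ν ∧ T.inv q.1 (resetVal ν lam), lam,
          ⟨p.1, a, φ, lam, q.1, he, rfl⟩, ⟨hφ, hq ▸ hinv⟩, hq⟩
      · rintro ⟨ψ, lam, ⟨l, a', φ, lam', l', he, heq⟩, hψ, hq⟩
        simp only [Prod.mk.injEq] at heq
        obtain ⟨rfl, rfl, hφeq, rfl, rfl⟩ := heq
        rw [hφeq] at hψ
        exact ⟨φ, lam, he, hψ.1, hq, hq ▸ hψ.2⟩
    · constructor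
      · rintro ⟨hu, h1, h2, h3⟩
        refine ⟨Set.notMem_empty _, h1, h2, fun k hk => ?_⟩
        show (URG T).inv p.1 _
        simp only [URG, if_neg hu]
        exact h3 k hk
      · rintro ⟨_, h1, h2, h3⟩
        have h0 := h3 0 (zero_le)
        simp only [URG] at h0
        by_cases hu : p.1 ∈ T.urgent
        · rw [if_pos hu] at h0; exact h0.elim
        · refine ⟨hu, h1, h2, fun k hk => ?_⟩
          have := h3 k hk
          simpa only [URG, if_neg hu] using this
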